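/- arXiv:2507.08994 — 3 statements merged into one kernel-verified Lean document; each statement's English description precedes it below -/
import Mathlib

section
/- Let Δ₁, …, Δ_N > 0 and consider probability vectors α over indices {1,…,2N} (pairs (a_j, b_j) for j=1,…,N). The supremum over such α of min_{j∈[N]} (Δ_j²/2)·(α_{a_j} α_{b_j}/(α_{a_j}+α_{b_j})) equals 1/(8·Σ_{j=1}^N 1/Δ_j²), attained when α_{a_j} = α_{b_j} = (1/Δ_j²)/(2Σ_{i=1}^N 1/Δ_i²). -/
open Finset

lemma amgm_div (a b : ℝ) (ha : 0 ≤ a) (hb : 0 ≤ b) : a * b / (a + b) ≤ (a + b) / 4 := by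
  rcases eq_or_lt_of_le (add_nonneg ha hb) with h | h
  · have ha0 : a = 0 := by linarith
    have hb0 : b = 0 := by linarith
    simp [ha0, hb0]
  · rw [div_le_div_iff₀ h (by norm_num)]
    nlinarith [sq_nonneg (a - b)]

/-- Optimal allocation for multiple change points: for gaps `Δ_j > 0`, the greatest value
over probability vectors split into pairs `(a_j, b_j)` (weights `α j`, `β j` with total sum 1)
of `min_j (Δ_j²/2) · α_j β_j / (α_j + β_j)` is `1 / (8 Σ_j 1/Δ_j²)`, attained at
`α_j = β_j = (1/Δ_j²) / (2 Σ_i 1/Δ_i²)`. -/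
theorem multiple_change_point_optimal_proportions (N : ℕ) (hN : 0 < N)
    (Δ : Fin N → ℝ) (hΔ : ∀ j, 0 < Δ j) :
    IsGreatest
      {z : ℝ | ∃ α β : Fin N → ℝ, (∀ j, 0 ≤ α j) ∧ (∀ j, 0 ≤ β j) ∧
          (∑ j, (α j + β j)) = 1 ∧
          z = (univ.inf' (⟨⟨0, hN⟩, Finset.mem_univ _⟩) fun j =>
            Δ j ^ 2 / 2 * (α j * β j / (α j + β j)))}
      (1 / (8 * ∑ j, 1 / Δ j ^ 2)) ∧
    (univ.inf' (⟨⟨0, hN⟩, Finset.mem_univ _⟩) fun j =>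
        Δ j ^ 2 / 2 *
          (((1 / Δ j ^ 2) / (2 * ∑ i, 1 / Δ i ^ 2)) * ((1 / Δ j ^ 2) / (2 * ∑ i, 1 / Δ i ^ 2)) /
            (((1 / Δ j ^ 2) / (2 * ∑ i, 1 / Δ i ^ 2)) + ((1 / Δ j ^ 2) / (2 * ∑ i, 1 / Δ i ^ 2)))))
      = 1 / (8 * ∑ j, 1 / Δ j ^ 2) := by
  have hS : 0 < ∑ j, 1 / Δ j ^ 2 :=
    Finset.sum_pos (fun j _ => by have := hΔ j; positivity) ⟨⟨0, hN⟩, mem_univ _⟩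
  set S : ℝ := ∑ j, 1 / Δ j ^ 2 with hSdef
  have hSne : S ≠ 0 := ne_of_gt hS
  have key : ∀ j : Fin N,
      Δ j ^ 2 / 2 *
        ((1 / Δ j ^ 2 / (2 * S)) * (1 / Δ j ^ 2 / (2 * S)) /
          ((1 / Δ j ^ 2 / (2 * S)) + (1 / Δ j ^ 2 / (2 * S)))) = 1 / (8 * S) := by
    intro j
    have hΔj := hΔ j
    have hΔne : Δ j ≠ 0 := ne_of_gt hΔj
    set x : ℝ := 1 / Δ j ^ 2 / (2 * S) with hx
    have hxpos : 0 < x := by positivity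
    have h1 : x * x / (x + x) = x / 2 := by
      rw [show x + x = 2 * x by ring]
      field_simp
    rw [h1, hx]
    field_simp
    ring
  have hconst : (univ.inf' (⟨⟨0, hN⟩, Finset.mem_univ _⟩) fun j =>
      Δ j ^ 2 / 2 *
        ((1 / Δ j ^ 2 / (2 * S)) * (1 / Δ j ^ 2 / (2 * S)) /
          ((1 / Δ j ^ 2 / (2 * S)) + (1 / Δ j ^ 2 / (2 * S))))) = 1 / (8 * S) := by
    rw [show (fun j => Δ j ^ 2 / 2 *
        ((1 / Δ j ^ 2 / (2 * S)) * (1 / Δ j ^ 2 / (2 * S)) /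
          ((1 / Δ j ^ 2 / (2 * S)) + (1 / Δ j ^ 2 / (2 * S))))) = fun _ : Fin N => 1 / (8 * S)
      from funext key]
    exact Finset.inf'_const _ _
  refine ⟨⟨⟨fun j => 1 / Δ j ^ 2 / (2 * S), fun j => 1 / Δ j ^ 2 / (2 * S),
      fun j => by have := hΔ j; positivity, fun j => by have := hΔ j; positivity, ?_, ?_⟩, ?_⟩,
      hconst⟩
  · have : ∀ j : Fin N, 1 / Δ j ^ 2 / (2 * S) + 1 / Δ j ^ 2 / (2 * S) = (1 / Δ j ^ 2) / S := by
      intro j; field_simp; ring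
    rw [Finset.sum_congr rfl fun j _ => this j, ← Finset.sum_div]
    exact div_self hSne
  · exact hconst.symm
  · rintro z ⟨α, β, hα, hβ, hsum, rfl⟩
    set m : ℝ := univ.inf' (⟨⟨0, hN⟩, Finset.mem_univ _⟩) fun j =>
      Δ j ^ 2 / 2 * (α j * β j / (α j + β j)) with hm
    have hbound : ∀ j : Fin N, m * (8 / Δ j ^ 2) ≤ α j + β j := by
      intro j
      have h1 : m ≤ Δ j ^ 2 / 2 * (α j * β j / (α j + β j)) :=
        Finset.inf'_le _ (mem_univ j)
      have h2 : α j * β j / (α j + β j) ≤ (α j + β j) / 4 := amgm_div _ _ (hα j) (hβ j)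
      have hΔj := hΔ j
      have h3 : m ≤ Δ j ^ 2 / 2 * ((α j + β j) / 4) :=
        h1.trans (by
          apply mul_le_mul_of_nonneg_left h2 (by positivity))
      have h4 : (0:ℝ) < 8 / Δ j ^ 2 := by positivity
      calc m * (8 / Δ j ^ 2) ≤ (Δ j ^ 2 / 2 * ((α j + β j) / 4)) * (8 / Δ j ^ 2) :=
            mul_le_mul_of_nonneg_right h3 (le_of_lt h4)
        _ = α j + β j := by field_simp; ring
    have hsum2 : m * (8 * S) ≤ 1 := by
      calc m * (8 * S) = ∑ j, m * (8 / Δ j ^ 2) := by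
            simp only [hSdef, Finset.mul_sum]
            exact Finset.sum_congr rfl fun j _ => by ring
        _ ≤ ∑ j, (α j + β j) := Finset.sum_le_sum fun j _ => hbound j
        _ = 1 := hsum
    rw [le_div_iff₀ (by positivity)]
    exact hsum2
end

section
/- Let Δ₁, …, Δ_N > 0 and consider probability vectors α over indices {1,…,2N}. The supremum over such α of min_{j∈[N]} (Δ_j²/2)·min(α_{a_j}, α_{b_j}) equals 1/(4·Σ_{j=1}^N 1/Δ_j²). -/
open Finset

/-- Exact-(N,δ) allocation: for gaps `Δ_j > 0`, the supremum over probability vectors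
split into pairs `(a_j, b_j)` (weights `α j`, `β j` with total sum 1) of
`min_j (Δ_j²/2) · min(α_j, β_j)` equals `1 / (4 Σ_j 1/Δ_j²)`. -/
theorem exact_N_optimal_proportions (N : ℕ) (hN : 0 < N)
    (Δ : Fin N → ℝ) (hΔ : ∀ j, 0 < Δ j) :
    IsLUB
      {z : ℝ | ∃ α β : Fin N → ℝ, (∀ j, 0 ≤ α j) ∧ (∀ j, 0 ≤ β j) ∧
          (∑ j, (α j + β j)) = 1 ∧
          z = (univ.inf' ⟨⟨0, hN⟩, Finset.mem_univ _⟩ fun j =>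
            Δ j ^ 2 / 2 * min (α j) (β j))}
      (1 / (4 * ∑ j, 1 / Δ j ^ 2)) := by
  set S : ℝ := ∑ j, 1 / Δ j ^ 2 with hSdef
  have hSpos : 0 < S := Finset.sum_pos (fun j _ => by have := hΔ j; positivity)
    ⟨⟨0, hN⟩, Finset.mem_univ _⟩
  -- membership of the bound in the set
  have hmem : (1 / (4 * S)) ∈
      {z : ℝ | ∃ α β : Fin N → ℝ, (∀ j, 0 ≤ α j) ∧ (∀ j, 0 ≤ β j) ∧
          (∑ j, (α j + β j)) = 1 ∧
          z = (univ.inf' ⟨⟨0, hN⟩, Finset.mem_univ _⟩ fun j =>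
            Δ j ^ 2 / 2 * min (α j) (β j))} := by
    refine ⟨fun j => 1 / Δ j ^ 2 / (2 * S), fun j => 1 / Δ j ^ 2 / (2 * S),
      fun j => by have := hΔ j; positivity, fun j => by have := hΔ j; positivity, ?_, ?_⟩
    · have h : ∀ j ∈ (univ : Finset (Fin N)),
          (1 / Δ j ^ 2 / (2 * S) + 1 / Δ j ^ 2 / (2 * S)) = (1 / Δ j ^ 2) * S⁻¹ := by
        intro j _
        have := (hΔ j).ne'
        field_simp
        ring
      rw [Finset.sum_congr rfl h, ← Finset.sum_mul, ← hSdef, mul_inv_cancel₀ hSpos.ne']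
    · have h : (fun j => Δ j ^ 2 / 2 * min (1 / Δ j ^ 2 / (2 * S)) (1 / Δ j ^ 2 / (2 * S)))
          = fun _ => 1 / (4 * S) := by
        funext j
        rw [min_self]
        have h1 : Δ j ≠ 0 := (hΔ j).ne'
        field_simp
        ring
      rw [h]; exact (Finset.inf'_const _ _).symm
  -- upper bound
  have hub : ∀ z ∈ {z : ℝ | ∃ α β : Fin N → ℝ, (∀ j, 0 ≤ α j) ∧ (∀ j, 0 ≤ β j) ∧
          (∑ j, (α j + β j)) = 1 ∧
          z = (univ.inf' ⟨⟨0, hN⟩, Finset.mem_univ _⟩ fun j =>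
            Δ j ^ 2 / 2 * min (α j) (β j))}, z ≤ 1 / (4 * S) := by
    rintro z ⟨α, β, hα, hβ, hsum, rfl⟩
    set m := (univ.inf' ⟨⟨0, hN⟩, Finset.mem_univ _⟩ fun j =>
      Δ j ^ 2 / 2 * min (α j) (β j)) with hm
    have key : ∀ j ∈ (univ : Finset (Fin N)), 4 * m * (1 / Δ j ^ 2) ≤ α j + β j := by
      intro j _
      have h1 : m ≤ Δ j ^ 2 / 2 * min (α j) (β j) :=
        Finset.inf'_le _ (Finset.mem_univ j)
      have hΔ2 : (0:ℝ) < Δ j ^ 2 := by have := hΔ j; positivity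
      have h2 : m * (1 / Δ j ^ 2) ≤ (Δ j ^ 2 / 2 * min (α j) (β j)) * (1 / Δ j ^ 2) :=
        mul_le_mul_of_nonneg_right h1 (by positivity)
      have h3 : (Δ j ^ 2 / 2 * min (α j) (β j)) * (1 / Δ j ^ 2) = min (α j) (β j) / 2 := by
        field_simp
        exact mul_div_cancel_left₀ _ (hΔ j).ne'
      rw [h3] at h2
      have h4 := min_le_left (α j) (β j)
      have h5 := min_le_right (α j) (β j)
      linarith
    have hsum2 : 4 * m * S ≤ 1 := by
      calc 4 * m * S = ∑ j, 4 * m * (1 / Δ j ^ 2) := by rw [hSdef, Finset.mul_sum]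
        _ ≤ ∑ j, (α j + β j) := Finset.sum_le_sum key
        _ = 1 := hsum
    rw [le_div_iff₀ (by positivity)]
    linarith
  exact ⟨hub, fun b hb => hb hmem⟩
end

section
/- Let x*, x' ∈ [K−1] with x' > x*, let μ have a single change point at x* with values μ_L (for i ≤ x*) and μ_R (for i > x*), Δ = |μ_L − μ_R| > 0, and let α be a probability vector on [K]. Among all environments μ' with a single change point at x' (values μ'_L for i ≤ x', μ'_R for i > x'), the infimum of (1/(2σ²))·Σ_{i=1}^K α_i (μ_i − μ'_i)² equals (Δ²/(2σ²))·(A·B/(A+B)), where A = Σ_{i=1}^{x*} α_i and B = Σ_{i=x*+1}^{x'} α_i (value 0 if A+B = 0). -/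
open Finset

/-- Closest alternative environment with a shifted change point: let `μ` have a single
change point at `x*` (values `μL` for indices `≤ x*`, `μR` after), `Δ = |μL − μR| > 0`,
and let `α` be a probability vector on `[K]`. Over all single-change-point environments
`μ'` with change point at `x' > x*` (values `μL'` then `μR'`), the infimum of
`(1/(2σ²)) Σᵢ αᵢ (μᵢ − μ'ᵢ)²` equals `(Δ²/(2σ²)) · AB/(A+B)`, where
`A = Σ_{i ≤ x*} αᵢ` and `B = Σ_{x* < i ≤ x'} αᵢ` (the value being `0` if `A + B = 0`). -/
theorem closest_alternative_shifted_change_point (K : ℕ) (xstar x' : ℕ)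
    (hx1 : 1 ≤ xstar) (hxx : xstar < x') (hx'K : x' ≤ K - 1)
    (μL μR σ : ℝ) (hσ : 0 < σ) (hΔ : μL ≠ μR)
    (α : Fin K → ℝ) (hα : ∀ i, 0 ≤ α i) (hαsum : ∑ i, α i = 1) :
    IsGLB
      {z : ℝ | ∃ μL' μR' : ℝ, z = 1 / (2 * σ ^ 2) *
        ∑ i : Fin K, α i *
          ((if (i : ℕ) < xstar then μL else μR) -
            (if (i : ℕ) < x' then μL' else μR')) ^ 2}
      ((μL - μR) ^ 2 / (2 * σ ^ 2) *
        ((∑ i ∈ univ.filter fun i : Fin K => (i : ℕ) < xstar, α i) *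
          (∑ i ∈ univ.filter fun i : Fin K => xstar ≤ (i : ℕ) ∧ (i : ℕ) < x', α i) /
          ((∑ i ∈ univ.filter fun i : Fin K => (i : ℕ) < xstar, α i) +
            (∑ i ∈ univ.filter fun i : Fin K => xstar ≤ (i : ℕ) ∧ (i : ℕ) < x', α i)))) := by
  set A := ∑ i ∈ univ.filter fun i : Fin K => (i : ℕ) < xstar, α i with hA
  set B := ∑ i ∈ univ.filter fun i : Fin K => xstar ≤ (i : ℕ) ∧ (i : ℕ) < x', α i with hB
  set C := ∑ i ∈ univ.filter fun i : Fin K => x' ≤ (i : ℕ), α i with hC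
  have hA0 : 0 ≤ A := Finset.sum_nonneg fun i _ => hα i
  have hB0 : 0 ≤ B := Finset.sum_nonneg fun i _ => hα i
  have hC0 : 0 ≤ C := Finset.sum_nonneg fun i _ => hα i
  have hσ2 : (0:ℝ) < 2 * σ ^ 2 := by positivity
  -- decomposition of the sum
  have key : ∀ μL' μR' : ℝ,
      ∑ i : Fin K, α i * ((if (i : ℕ) < xstar then μL else μR) -
        (if (i : ℕ) < x' then μL' else μR')) ^ 2
      = A * (μL - μL') ^ 2 + B * (μR - μL') ^ 2 + C * (μR - μR') ^ 2 := by
    intro μL' μR'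
    rw [← Finset.sum_filter_add_sum_filter_not univ (fun i : Fin K => (i : ℕ) < x')]
    have h1 : ∑ i ∈ univ.filter fun i : Fin K => (i : ℕ) < x',
        α i * ((if (i : ℕ) < xstar then μL else μR) -
          (if (i : ℕ) < x' then μL' else μR')) ^ 2
        = A * (μL - μL') ^ 2 + B * (μR - μL') ^ 2 := by
      rw [← Finset.sum_filter_add_sum_filter_not
        (univ.filter fun i : Fin K => (i : ℕ) < x') (fun i : Fin K => (i : ℕ) < xstar)]
      congr 1
      · rw [hA, Finset.sum_mul]
        rw [Finset.filter_filter]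
        apply Finset.sum_congr
        · apply Finset.filter_congr
          intro i _
          constructor
          · rintro ⟨_, h⟩; exact h
          · intro h; exact ⟨lt_trans h hxx, h⟩
        · intro i hi
          simp only [Finset.mem_filter] at hi
          rw [if_pos hi.2, if_pos (lt_trans hi.2 hxx)]
      · rw [hB, Finset.sum_mul]
        rw [Finset.filter_filter]
        apply Finset.sum_congr
        · apply Finset.filter_congr
          intro i _
          simp only [not_lt]
          tauto
        · intro i hi
          simp only [Finset.mem_filter, not_lt] at hi
          rw [if_neg (not_lt.mpr hi.2.1), if_pos hi.2.2]
    have h2 : ∑ i ∈ univ.filter fun i : Fin K => ¬ (i : ℕ) < x',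
        α i * ((if (i : ℕ) < xstar then μL else μR) -
          (if (i : ℕ) < x' then μL' else μR')) ^ 2
        = C * (μR - μR') ^ 2 := by
      rw [hC, Finset.sum_mul]
      apply Finset.sum_congr
      · apply Finset.filter_congr
        intro i _
        simp [not_lt]
      · intro i hi
        simp only [Finset.mem_filter, not_lt] at hi
        rw [if_neg (not_lt.mpr (le_trans (le_of_lt hxx) hi.2))]
        try rw [if_neg (not_lt.mpr hi.2)]
    rw [h1, h2]
  -- membership
  have hmem : ((μL - μR) ^ 2 / (2 * σ ^ 2) * (A * B / (A + B))) ∈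
      {z : ℝ | ∃ μL' μR' : ℝ, z = 1 / (2 * σ ^ 2) *
        ∑ i : Fin K, α i *
          ((if (i : ℕ) < xstar then μL else μR) -
            (if (i : ℕ) < x' then μL' else μR')) ^ 2} := by
    by_cases hAB : A + B = 0
    · have hA' : A = 0 := by linarith
      have hB' : B = 0 := by linarith
      refine ⟨μL, μR, ?_⟩
      rw [key μL μR, hA', hB']
      simp
    · have hABpos : 0 < A + B := lt_of_le_of_ne (by linarith) (Ne.symm hAB)
      refine ⟨(A * μL + B * μR) / (A + B), μR, ?_⟩
      rw [key]
      field_simp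
      ring
  constructor
  · -- lower bound
    rintro z ⟨μL', μR', rfl⟩
    rw [key]
    by_cases hAB : A + B = 0
    · have hA' : A = 0 := by linarith
      have hB' : B = 0 := by linarith
      rw [hA', hB']
      have : (μL - μR) ^ 2 / (2 * σ ^ 2) * (0 * 0 / (0 + 0)) = 0 := by simp
      rw [this]
      positivity
    · have hABpos : 0 < A + B := lt_of_le_of_ne (by linarith) (Ne.symm hAB)
      have hS : A * B * (μL - μR) ^ 2 / (A + B)
          ≤ A * (μL - μL') ^ 2 + B * (μR - μL') ^ 2 + C * (μR - μR') ^ 2 := by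
        rw [div_le_iff₀ hABpos]
        nlinarith [sq_nonneg (A * (μL - μL') + B * (μR - μL')),
          mul_nonneg (mul_nonneg hC0 (sq_nonneg (μR - μR'))) hABpos.le]
      have heq : (μL - μR) ^ 2 / (2 * σ ^ 2) * (A * B / (A + B))
          = 1 / (2 * σ ^ 2) * (A * B * (μL - μR) ^ 2 / (A + B)) := by
        field_simp
      rw [heq]
      apply mul_le_mul_of_nonneg_left hS
      positivity
  · intro b hb
    exact hb hmem
end
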